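/- With the notation of the extreme Myers–Perry slice data, for all a, b > 0, r > 0 and θ ∈ (0, π/2) the following chain of inequalities holds for the conformal factor Φ₀: (abμ)^{1/4} ≤ [ (r²+ab+a²)(r²+ab+b²) ]^{1/4} ≤ r·Φ₀ ≤ [ (r²+ab+a²)(r²+ab+b²) + μ² ]^{1/4}. -/

import Mathlib

noncomputable section

namespace MP

/-- `Σ = r² + ab + a²cos²θ + b²sin²θ`. -/
def Sig (a b r θ : ℝ) : ℝ :=
  r ^ 2 + a * b + a ^ 2 * Real.cos θ ^ 2 + b ^ 2 * Real.sin θ ^ 2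

/-- `A = r² + ab + a²`. -/
def Afun (a b r : ℝ) : ℝ := r ^ 2 + a * b + a ^ 2

/-- `B = r² + ab + b²`. -/
def Bfun (a b r : ℝ) : ℝ := r ^ 2 + a * b + b ^ 2

/-- `σ₁₁ = a²μ sin⁴θ/Σ + A sin²θ`, with `μ = (a+b)²`. -/
def sig11 (a b r θ : ℝ) : ℝ :=
  a ^ 2 * (a + b) ^ 2 * Real.sin θ ^ 4 / Sig a b r θ + Afun a b r * Real.sin θ ^ 2

/-- `σ₂₂ = b²μ cos⁴θ/Σ + B cos²θ`, with `μ = (a+b)²`. -/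
def sig22 (a b r θ : ℝ) : ℝ :=
  b ^ 2 * (a + b) ^ 2 * Real.cos θ ^ 4 / Sig a b r θ + Bfun a b r * Real.cos θ ^ 2

/-- `σ₁₂ = abμ sin²θ cos²θ/Σ`, with `μ = (a+b)²`. -/
def sig12 (a b r θ : ℝ) : ℝ :=
  a * b * (a + b) ^ 2 * Real.sin θ ^ 2 * Real.cos θ ^ 2 / Sig a b r θ

/-- `ρ = r² sinθ cosθ (= ½ r² sin 2θ)`. -/
def rho (r θ : ℝ) : ℝ := r ^ 2 * Real.sin θ * Real.cos θ

/-- `det σ = σ₁₁σ₂₂ − σ₁₂²`. -/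
def detSig (a b r θ : ℝ) : ℝ :=
  sig11 a b r θ * sig22 a b r θ - sig12 a b r θ ^ 2

/-- The conformal factor `Φ₀ > 0`, defined by `Φ₀² = √(det σ)/ρ`. -/
def Phi0 (a b r θ : ℝ) : ℝ := Real.sqrt (Real.sqrt (detSig a b r θ) / rho r θ)

end MP

end

set_option maxHeartbeats 1000000 in
open MP in
/-- Bounds on the conformal factor of the extreme Myers–Perry slice (`μ = (a+b)²`):
`(abμ)^{1/4} ≤ ((r²+ab+a²)(r²+ab+b²))^{1/4} ≤ rΦ₀ ≤ ((r²+ab+a²)(r²+ab+b²) + μ²)^{1/4}`. -/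
theorem Phi0_bounds (a b : ℝ) (ha : 0 < a) (hb : 0 < b)
    (r θ : ℝ) (hr : 0 < r) (hθ : θ ∈ Set.Ioo 0 (Real.pi / 2)) :
    (a * b * (a + b) ^ 2) ^ ((1 : ℝ) / 4) ≤ (Afun a b r * Bfun a b r) ^ ((1 : ℝ) / 4) ∧
    (Afun a b r * Bfun a b r) ^ ((1 : ℝ) / 4) ≤ r * Phi0 a b r θ ∧
    r * Phi0 a b r θ ≤
      (Afun a b r * Bfun a b r + ((a + b) ^ 2) ^ 2) ^ ((1 : ℝ) / 4) := by
  obtain ⟨hθ0, hθ2⟩ := hθ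
  have hS : 0 < Real.sin θ := Real.sin_pos_of_pos_of_lt_pi hθ0 (lt_trans hθ2 (by linarith [Real.pi_pos]))
  have hC : 0 < Real.cos θ := Real.cos_pos_of_mem_Ioo ⟨by linarith [Real.pi_pos], hθ2⟩
  have hpyth : Real.sin θ ^ 2 + Real.cos θ ^ 2 = 1 := Real.sin_sq_add_cos_sq θ
  set S := Real.sin θ with hSdef
  set C := Real.cos θ with hCdef
  clear_value S C
  have hSig : 0 < Sig a b r θ := by
    unfold Sig
    positivity
  have hA : 0 < Afun a b r := by unfold Afun; positivity
  have hB : 0 < Bfun a b r := by unfold Bfun; positivity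
  set Q : ℝ := Afun a b r * Bfun a b r +
      (a + b) ^ 2 * (a ^ 2 * S ^ 2 * Bfun a b r + b ^ 2 * C ^ 2 * Afun a b r) / Sig a b r θ
    with hQdef
  have hdet : detSig a b r θ = S ^ 2 * C ^ 2 * Q := by
    rw [hQdef]
    unfold detSig sig11 sig22 sig12
    simp only [← hSdef, ← hCdef]
    field_simp
    ring
  have hT : 0 ≤ (a + b) ^ 2 * (a ^ 2 * S ^ 2 * Bfun a b r + b ^ 2 * C ^ 2 * Afun a b r) / Sig a b r θ := by
    positivity
  have hQpos : 0 < Q := by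
    have := mul_pos hA hB
    rw [hQdef]; linarith
  -- r * Phi0 = Q ^ (1/4)
  have hrPhi : r * Phi0 a b r θ = Q ^ ((1:ℝ)/4) := by
    unfold Phi0 rho
    simp only [← hSdef, ← hCdef]
    rw [hdet]
    have h1 : S ^ 2 * C ^ 2 * Q = (S * C) ^ 2 * Q := by ring
    rw [h1, Real.sqrt_mul (sq_nonneg _), Real.sqrt_sq (by positivity : (0:ℝ) ≤ S * C)]
    have h2 : S * C * Real.sqrt Q / (r ^ 2 * S * C) = Real.sqrt Q / r ^ 2 := by
      field_simp
    rw [h2, Real.sqrt_div' _ (sq_nonneg r), Real.sqrt_sq hr.le,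
      mul_div_cancel₀ _ (ne_of_gt hr), Real.sqrt_eq_rpow, Real.sqrt_eq_rpow,
      ← Real.rpow_mul hQpos.le]
    norm_num
  -- bounds on Q
  have hQlow : Afun a b r * Bfun a b r ≤ Q := by
    rw [hQdef]; linarith
  have hQhigh : Q ≤ Afun a b r * Bfun a b r + ((a + b) ^ 2) ^ 2 := by
    rw [hQdef]
    have key : (a + b) ^ 2 * (a ^ 2 * S ^ 2 * Bfun a b r + b ^ 2 * C ^ 2 * Afun a b r)
        ≤ ((a + b) ^ 2) ^ 2 * Sig a b r θ := by
      unfold Afun Bfun Sig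
      simp only [← hSdef, ← hCdef]
      have hS1 : S ^ 2 ≤ 1 := by nlinarith [sq_nonneg C]
      have hC1 : C ^ 2 ≤ 1 := by nlinarith [sq_nonneg S]
      have h1 : (r ^ 2 + a * b) * (a ^ 2 * S ^ 2 + b ^ 2 * C ^ 2)
          ≤ (r ^ 2 + a * b) * (a + b) ^ 2 := by
        have hP : (0:ℝ) ≤ r ^ 2 + a * b := by positivity
        have h4 : a ^ 2 * (S ^ 2 + C ^ 2) = a ^ 2 := by rw [hpyth, mul_one]
        have h5 : b ^ 2 * (S ^ 2 + C ^ 2) = b ^ 2 := by rw [hpyth, mul_one]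
        have : a ^ 2 * S ^ 2 + b ^ 2 * C ^ 2 ≤ (a + b) ^ 2 := by
          nlinarith [mul_nonneg (sq_nonneg a) (sq_nonneg C),
            mul_nonneg (sq_nonneg b) (sq_nonneg S), mul_pos ha hb, h4, h5]
        exact mul_le_mul_of_nonneg_left this hP
      have h2 : a ^ 2 * b ^ 2 ≤ (a + b) ^ 2 * (a ^ 2 * C ^ 2 + b ^ 2 * S ^ 2) := by
        have h3 : a ^ 2 * b ^ 2 * (S ^ 2 + C ^ 2) = a ^ 2 * b ^ 2 := by rw [hpyth, mul_one]
        nlinarith [mul_nonneg (sq_nonneg C) (by positivity : (0:ℝ) ≤ a ^ 2 * (a ^ 2 + 2 * a * b)),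
          mul_nonneg (sq_nonneg S) (by positivity : (0:ℝ) ≤ b ^ 2 * (b ^ 2 + 2 * a * b)), h3]
      have hmain := mul_le_mul_of_nonneg_left (add_le_add h1 h2) (sq_nonneg (a + b))
      calc (a + b) ^ 2 * (a ^ 2 * S ^ 2 * (r ^ 2 + a * b + b ^ 2)
            + b ^ 2 * C ^ 2 * (r ^ 2 + a * b + a ^ 2))
          = (a + b) ^ 2 * ((r ^ 2 + a * b) * (a ^ 2 * S ^ 2 + b ^ 2 * C ^ 2)
            + a ^ 2 * b ^ 2) := by
            linear_combination (a + b) ^ 2 * a ^ 2 * b ^ 2 * hpyth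
        _ ≤ (a + b) ^ 2 * ((r ^ 2 + a * b) * (a + b) ^ 2
            + (a + b) ^ 2 * (a ^ 2 * C ^ 2 + b ^ 2 * S ^ 2)) := hmain
        _ = ((a + b) ^ 2) ^ 2 * (r ^ 2 + a * b + a ^ 2 * C ^ 2 + b ^ 2 * S ^ 2) := by ring
    calc Afun a b r * Bfun a b r +
        (a + b) ^ 2 * (a ^ 2 * S ^ 2 * Bfun a b r + b ^ 2 * C ^ 2 * Afun a b r) / Sig a b r θ
        ≤ Afun a b r * Bfun a b r + ((a + b) ^ 2) ^ 2 * Sig a b r θ / Sig a b r θ := by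
          exact add_le_add le_rfl ((div_le_div_iff_of_pos_right hSig).mpr key)
      _ = Afun a b r * Bfun a b r + ((a + b) ^ 2) ^ 2 := by
          rw [mul_div_assoc, div_self (ne_of_gt hSig), mul_one]
  have habμ : a * b * (a + b) ^ 2 ≤ Afun a b r * Bfun a b r := by
    unfold Afun Bfun
    nlinarith [sq_nonneg r, mul_pos ha hb, sq_nonneg (r*(a+b)), sq_nonneg (r*r)]
  refine ⟨Real.rpow_le_rpow (by positivity) habμ (by norm_num), ?_, ?_⟩
  · rw [hrPhi]
    exact Real.rpow_le_rpow (mul_pos hA hB).le hQlow (by norm_num)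
  · rw [hrPhi]
    exact Real.rpow_le_rpow hQpos.le hQhigh (by norm_num)
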